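/- A decision-making mechanism with perfect information is gap-free if and only if it is an elected dictatorship: at every leaf node some agent is (counterfactually) responsible if and only if every root-to-leaf decision path contains a node at which some agent is a dictator. -/

import Mathlib

inductive Outcome where
  | yes : Outcome
  | no : Outcome
deriving DecidableEq

def Outcome.flip : Outcome → Outcome
  | .yes => .no
  | .no => .yes

/-- A decision-making mechanism (perfect information):
a finite rooted directed tree `(V, E)` with root `root`,
agents `A`, actions `Act`, available-action sets `Δ`,
choice functions `τ`, and a leaf labelling `lab`. -/
structure Mech (V A Act : Type) where
  finV : Fintype V
  E : V → V → Prop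
  root : V
  root_no_parent : ∀ v, ¬ E v root
  unique_parent : ∀ u v w, E u w → E v w → u = v
  reach : ∀ v, Relation.ReflTransGen E root v
  Δ : A → V → Set Act
  Δ_nonempty : ∀ a v, (∃ u, E v u) → (Δ a v).Nonempty
  τ : V → (A → Act) → V
  τ_child : ∀ v δ, (∃ u, E v u) → (∀ b, δ b ∈ Δ b v) → E v (τ v δ)
  lab : V → Outcome

namespace Mech

variable {V A Act : Type}

def IsLeaf (M : Mech V A Act) (v : V) : Prop := ∀ u, ¬ M.E v u

def IsDecision (M : Mech V A Act) (v : V) : Prop := ∃ u, M.E v u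

/-- `Next a d v` : the set of children the process can move to from `v`
when agent `a` chooses action `d`. -/
def Next (M : Mech V A Act) (a : A) (d : Act) (v : V) : Set V :=
  { u | ∃ δ : A → Act, (∀ b, δ b ∈ M.Δ b v) ∧ δ a = d ∧ u = M.τ v δ }

/-- `win_a(o)`: the smallest set containing all leaves labelled `o` and
closed under: if `Next a d v ⊆ win_a(o)` for some available action `d`
at a decision node `v`, then `v ∈ win_a(o)`. -/
inductive Win (M : Mech V A Act) (a : A) (o : Outcome) : V → Prop where
  | leaf (v : V) : M.IsLeaf v → M.lab v = o → Win M a o v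
  | step (v : V) (d : Act) : M.IsDecision v → d ∈ M.Δ a v →
      (∀ u ∈ M.Next a d v, Win M a o u) → Win M a o v

/-- A decision path starting at the root. -/
def RootPath (M : Mech V A Act) (l : List V) : Prop :=
  l.head? = some M.root ∧ l.Chain' M.E

/-- Agent `a` is (counterfactually) responsible at leaf `v`. -/
def Responsible (M : Mech V A Act) (a : A) (v : V) : Prop :=
  ∃ l : List V, M.RootPath l ∧ l.getLast? = some v ∧
    ∃ u ∈ l, M.IsDecision u ∧ M.Win a (M.lab v).flip u

def GapFree (M : Mech V A Act) : Prop :=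
  ∀ v, M.IsLeaf v → ∃ a, M.Responsible a v

def Dictator (M : Mech V A Act) (a : A) (v : V) : Prop :=
  M.Win a Outcome.yes v ∧ M.Win a Outcome.no v

def ElectedDictatorship (M : Mech V A Act) : Prop :=
  ∀ (l : List V) (v : V), M.RootPath l → l.getLast? = some v → M.IsLeaf v →
    ∃ u ∈ l, ∃ a, M.Dictator a u

end Mech

/-- A decision-making mechanism with imperfect information. -/
structure IMech (V A Act : Type) extends Mech V A Act where
  sim : A → V → V → Prop
  sim_equiv : ∀ a, Equivalence (sim a)
  sim_decision : ∀ a u v, sim a u v → ((∃ w, E u w) ↔ (∃ w, E v w))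
  sim_Δ : ∀ a u v, sim a u v → Δ a u = Δ a v

namespace IMech

variable {V A Act : Type}

/-- `Next a d ([v]_a)` : the union of `Next a d u` over all `u ∼_a v`. -/
def NextCl (M : IMech V A Act) (a : A) (d : Act) (v : V) : Set V :=
  { w | ∃ u, M.sim a v u ∧ w ∈ M.toMech.Next a d u }

/-- `ewin_a(o)`. -/
inductive EWin (M : IMech V A Act) (a : A) (o : Outcome) : V → Prop where
  | leaf (v : V) : M.toMech.IsLeaf v → M.lab v = o → EWin M a o v
  | known (v : V) (d : Act) : M.toMech.IsDecision v → d ∈ M.Δ a v →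
      (∀ w ∈ M.NextCl a d v, EWin M a o w) → EWin M a o v
  | blind (v : V) : M.toMech.IsDecision v →
      (∀ d ∈ M.Δ a v, ∀ w ∈ M.toMech.Next a d v, EWin M a o w) → EWin M a o v

/-- `uwin_a(o)`. -/
inductive UWin (M : IMech V A Act) (a : A) (o : Outcome) : V → Prop where
  | leaf (v : V) : M.toMech.IsLeaf v → M.lab v = o → UWin M a o v
  | known (v : V) (d : Act) : M.toMech.IsDecision v → d ∈ M.Δ a v →
      (∀ w ∈ M.NextCl a d v, UWin M a o w) → UWin M a o v

def EpistemicallyResponsible (M : IMech V A Act) (a : A) (v : V) : Prop :=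
  ∃ l : List V, M.toMech.RootPath l ∧ l.getLast? = some v ∧
    ∃ u ∈ l, M.toMech.IsDecision u ∧ M.EWin a (M.lab v).flip u

def EpistemicGapFree (M : IMech V A Act) : Prop :=
  ∀ v, M.toMech.IsLeaf v → ∃ a, M.EpistemicallyResponsible a v

def EpistemicDictator (M : IMech V A Act) (a : A) (v : V) : Prop :=
  M.EWin a Outcome.yes v ∧ M.EWin a Outcome.no v

def ElectedEpistemicDictatorship (M : IMech V A Act) : Prop :=
  ∀ (l : List V) (v : V), M.toMech.RootPath l → l.getLast? = some v →
    M.toMech.IsLeaf v → ∃ u ∈ l, ∃ a, M.EpistemicDictator a u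

def SemiEpistemicDictator (M : IMech V A Act) (a : A) (v : V) : Prop :=
  ∃ o : Outcome, M.EWin a o v ∧ M.toMech.Win a o.flip v

def ElectedSemiEpistemicDictatorship (M : IMech V A Act) : Prop :=
  ∀ (l : List V) (v : V), M.toMech.RootPath l → l.getLast? = some v →
    M.toMech.IsLeaf v → ∃ u ∈ l, ∃ a, M.SemiEpistemicDictator a u

end IMech


section Aux

open Mech

variable {V A Act : Type} {M : Mech V A Act}

lemma Outcome.flip_flip (o : Outcome) : o.flip.flip = o := by cases o <;> rfl

lemma aux_leaf_not_decision {v : V} (hl : M.IsLeaf v) (hd : M.IsDecision v) : False := by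
  obtain ⟨u, hu⟩ := hd; exact hl u hu

/-- No two distinct agents can win opposite outcomes at the same node. -/
lemma aux_no_opposite {a b : A} {o : Outcome} {v : V} (hab : a ≠ b)
    (ha : M.Win a o v) : ¬ M.Win b o.flip v := by
  induction ha with
  | leaf v hl hlab =>
    intro hb
    cases hb with
    | leaf _ _ hlab' =>
      rw [hlab] at hlab'; cases o <;> simp [Outcome.flip] at hlab'
    | step _ e hdec _ _ => exact aux_leaf_not_decision hl hdec
  | step v d hdec hd hnext IH =>
    intro hb
    cases hb with
    | leaf _ hl _ => exact aux_leaf_not_decision hl hdec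
    | step _ e _ he hnext' =>
      classical
      set δ : A → Act := fun c =>
        if c = a then d else if c = b then e else (M.Δ_nonempty c v hdec).choose with hδ
      have hvalid : ∀ c, δ c ∈ M.Δ c v := by
        intro c
        by_cases h1 : c = a
        · subst h1; simpa [hδ] using hd
        · by_cases h2 : c = b
          · subst h2; simpa [hδ, h1] using he
          · simpa [hδ, h1, h2] using (M.Δ_nonempty c v hdec).choose_spec
      have hmem : M.τ v δ ∈ M.Next a d v := ⟨δ, hvalid, by simp [hδ], rfl⟩
      have hmem' : M.τ v δ ∈ M.Next b e v :=
        ⟨δ, hvalid, by simp [hδ, Ne.symm hab], rfl⟩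
      exact IH _ hmem (hnext' _ hmem')

/-- From a node where agent `b` wins `o` and nobody wins `o.flip`, one can reach a
leaf labelled `o` along a path that contains no `o.flip`-winner. -/
lemma aux_escape {b : A} {o : Outcome} {v : V} (hw : M.Win b o v) :
    (∀ c, ¬ M.Win c o.flip v) →
    ∃ (l : List V) (z : V), l.head? = some v ∧ l.Chain' M.E ∧ l.getLast? = some z ∧
      M.IsLeaf z ∧ M.lab z = o ∧ ∀ u ∈ l, ∀ c, ¬ M.Win c o.flip u := by
  induction hw with
  | leaf v hl hlab =>
    intro H
    exact ⟨[v], v, rfl, List.isChain_singleton v, rfl, hl, hlab, by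
      intro u hu c; simp only [List.mem_singleton] at hu; subst hu; exact H c⟩
  | step v d hdec hd hnext IH =>
    intro H
    have hex : ∃ u ∈ M.Next b d v, ¬ M.Win b o.flip u := by
      by_contra hcon
      push_neg at hcon
      exact H b (Mech.Win.step v d hdec hd hcon)
    obtain ⟨u, hu, hnu⟩ := hex
    have Hu : ∀ c, ¬ M.Win c o.flip u := by
      intro c hc
      by_cases hcb : c = b
      · exact hnu (hcb ▸ hc)
      · exact aux_no_opposite (fun h => hcb h.symm) (hnext u hu) hc
    obtain ⟨l, z, hh, hch, hlast, hlz, hlab, hall⟩ := IH u hu Hu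
    have hEvu : M.E v u := by
      obtain ⟨δ, hδ, _, rfl⟩ := hu
      exact M.τ_child v δ hdec hδ
    refine ⟨v :: l, z, rfl, ?_, ?_, hlz, hlab, ?_⟩
    · cases l with
      | nil => simp at hh
      | cons x t =>
        have hx : x = u := by simpa using hh
        subst hx
        exact List.isChain_cons_cons.mpr ⟨hEvu, hch⟩
    · cases l with
      | nil => simp at hh
      | cons x t => simpa using hlast
    · intro w hw c
      rcases List.mem_cons.mp hw with h | h
      · subst h; exact H c
      · exact hall w h c

/-- Root paths to a given node are unique. -/
lemma aux_rootpath_unique :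
    ∀ (n : ℕ) (l l' : List V), l.length ≤ n → M.RootPath l → M.RootPath l' →
      l.getLast? = l'.getLast? → l = l' := by
  intro n
  induction n with
  | zero =>
    intro l l' hn hl hl' _
    rcases l with _ | ⟨x, t⟩
    · simp [Mech.RootPath] at hl
    · simp at hn
  | succ n IH =>
    intro l l' hn hl hl' hlast
    rcases List.eq_nil_or_concat' l with rfl | ⟨t, x, rfl⟩
    · simp [Mech.RootPath] at hl
    rcases List.eq_nil_or_concat' l' with rfl | ⟨t', x', rfl⟩
    · simp [Mech.RootPath] at hl'
    have hxx : x = x' := by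
      rw [List.getLast?_concat, List.getLast?_concat] at hlast
      exact Option.some_injective _ hlast
    subst hxx
    rcases t with _ | ⟨y, s⟩
    · -- l = [x], so x = root
      have hxr : x = M.root := by simpa using hl.1
      rcases t' with _ | ⟨y', s'⟩
      · rfl
      · exfalso
        obtain ⟨_, _, hlink⟩ := List.isChain_append.mp hl'.2
        have hw' : (y' :: s').getLast? = some ((y' :: s').getLast (by simp)) :=
          List.getLast?_eq_getLast _
        have hE : M.E ((y' :: s').getLast (by simp)) x := hlink _ hw' _ rfl
        rw [hxr] at hE
        exact M.root_no_parent _ hE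
    · rcases t' with _ | ⟨y', s'⟩
      · exfalso
        have hxr : x = M.root := by simpa using hl'.1
        obtain ⟨_, _, hlink⟩ := List.isChain_append.mp hl.2
        have hw : (y :: s).getLast? = some ((y :: s).getLast (by simp)) :=
          List.getLast?_eq_getLast _
        have hE : M.E ((y :: s).getLast (by simp)) x := hlink _ hw _ rfl
        rw [hxr] at hE
        exact M.root_no_parent _ hE
      · -- both prefixes nonempty
        have hw : (y :: s).getLast? = some ((y :: s).getLast (by simp)) :=
          (List.getLast?_eq_getLast _)
        have hw' : (y' :: s').getLast? = some ((y' :: s').getLast (by simp)) :=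
          (List.getLast?_eq_getLast _)
        obtain ⟨_, _, hlink⟩ := List.isChain_append.mp hl.2
        obtain ⟨_, _, hlink'⟩ := List.isChain_append.mp hl'.2
        have hE : M.E ((y :: s).getLast (by simp)) x := hlink _ hw _ rfl
        have hE' : M.E ((y' :: s').getLast (by simp)) x := hlink' _ hw' _ rfl
        have heq : (y :: s).getLast (by simp) = (y' :: s').getLast (by simp) :=
          M.unique_parent _ _ _ hE hE'
        have hrp : M.RootPath (y :: s) := by
          constructor
          · have := hl.1
            rwa [List.head?_append_of_ne_nil _ (by simp)] at this
          · exact (List.isChain_append.mp hl.2).1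
        have hrp' : M.RootPath (y' :: s') := by
          constructor
          · have := hl'.1
            rwa [List.head?_append_of_ne_nil _ (by simp)] at this
          · exact (List.isChain_append.mp hl'.2).1
        have hlen : (y :: s).length ≤ n := by
          have := hn
          simp only [List.length_append, List.length_cons] at this ⊢
          omega
        have : (y :: s) = (y' :: s') := by
          apply IH _ _ hlen hrp hrp'
          rw [hw, hw', heq]
        rw [this]

/-- Existence of a root path to any node. -/
lemma aux_exists_rootpath (v : V) :
    ∃ l : List V, M.RootPath l ∧ l.getLast? = some v := by
  have h := M.reach v
  induction h with
  | refl => exact ⟨[M.root], ⟨rfl, List.isChain_singleton _⟩, rfl⟩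
  | tail hab hbc IH =>
    obtain ⟨l, hrp, hlast⟩ := IH
    rename_i b c
    refine ⟨l ++ [c], ⟨?_, ?_⟩, List.getLast?_concat⟩
    · rw [List.head?_append_of_ne_nil]
      · exact hrp.1
      · intro h; subst h; simp [Mech.RootPath] at hrp
    · refine List.isChain_append.mpr ⟨hrp.2, List.isChain_singleton _, ?_⟩
      intro x hx y hy
      simp only [List.head?_cons, Option.mem_def, Option.some.injEq] at hy
      subst hy
      rw [hlast] at hx
      simp only [Option.mem_def, Option.some.injEq] at hx
      subst hx
      exact hbc

lemma aux_dictator_decision {a : A} {u : V} (hd : M.Dictator a u) : M.IsDecision u := by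
  cases hd.1 with
  | step _ _ h _ _ => exact h
  | leaf _ hl hlab =>
    cases hd.2 with
    | step _ _ h _ _ => exact h
    | leaf _ _ hlab' => rw [hlab] at hlab'; cases hlab'

lemma aux_split_first {α : Type} {P : α → Prop} :
    ∀ l : List α, (∃ x ∈ l, P x) →
      ∃ l₁ x l₂, l = l₁ ++ x :: l₂ ∧ P x ∧ ∀ y ∈ l₁, ¬ P y := by
  classical
  intro l
  induction l with
  | nil => simp
  | cons h t IH =>
    intro hex
    by_cases hP : P h
    · exact ⟨[], h, t, rfl, hP, by simp⟩
    · obtain ⟨x, hx, hpx⟩ := hex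
      rcases List.mem_cons.mp hx with rfl | hxt
      · exact absurd hpx hP
      · obtain ⟨l₁, y, l₂, heq, hPy, hall⟩ := IH ⟨x, hxt, hpx⟩
        refine ⟨h :: l₁, y, l₂, by rw [heq]; rfl, hPy, ?_⟩
        intro z hz
        rcases List.mem_cons.mp hz with rfl | hz'
        · exact hP
        · exact hall z hz'

end Aux

theorem stmt10 {V A Act : Type} (M : Mech V A Act) :
    M.GapFree ↔ M.ElectedDictatorship := by
  constructor
  · -- gap-free implies elected dictatorship
    intro hgf l v hrp hlast hleaf
    by_contra hnd
    push_neg at hnd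
    -- v is in l, and v has a "winner" (any agent wins lab v at the leaf v)
    have hvmem : v ∈ l := List.mem_of_mem_getLast? (by rw [hlast]; rfl)
    obtain ⟨a0, _⟩ := hgf v hleaf
    have hvwin : ∃ c o₁, M.Win c o₁ v := ⟨a0, M.lab v, Mech.Win.leaf v hleaf rfl⟩
    -- split l at the first node with a winner
    obtain ⟨l₁, x, l₂, heq, ⟨c, o1, hcx⟩, hnowin⟩ :=
      aux_split_first (P := fun u => ∃ c o₁, M.Win c o₁ u) l ⟨v, hvmem, hvwin⟩
    have hxmem : x ∈ l := by rw [heq]; simp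
    -- nobody wins o1.flip at x
    have Hx : ∀ b, ¬ M.Win b o1.flip x := by
      intro b hb
      by_cases hbc : b = c
      · subst hbc
        apply hnd x hxmem b
        cases o1 with
        | yes => exact ⟨hcx, hb⟩
        | no => exact ⟨hb, hcx⟩
      · exact aux_no_opposite (Ne.symm hbc) hcx hb
    obtain ⟨ls, z, hsh, hsch, hslast, hslz, hslab, hsall⟩ := aux_escape hcx Hx
    have hlsne : ls ≠ [] := by
      intro h; subst h; simp at hsh
    -- the combined path l₁ ++ ls is a root path ending at z
    have hrpstar : M.RootPath (l₁ ++ ls) := by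
      constructor
      · rcases l₁ with _ | ⟨w, t⟩
        · have hx : x = M.root := by
            have := hrp.1
            rw [heq] at this
            simpa using this
          simp only [List.nil_append]
          rw [hsh, hx]
        · rw [List.head?_append_of_ne_nil _ (by simp)]
          have := hrp.1
          rw [heq, List.head?_append_of_ne_nil _ (by simp)] at this
          exact this
      · refine List.isChain_append.mpr ⟨?_, hsch, ?_⟩
        · have := hrp.2
          rw [heq] at this
          exact (List.isChain_append.mp this).1
        · intro p hp q hq
          have := hrp.2
          rw [heq] at this
          have hlink := (List.isChain_append.mp this).2.2
          rw [hsh] at hq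
          simp only [Option.mem_def, Option.some.injEq] at hq
          subst hq
          exact hlink p hp x rfl
    have hrplast : (l₁ ++ ls).getLast? = some z := by
      rw [List.getLast?_append_of_ne_nil _ hlsne]; exact hslast
    -- z is an unblamed leaf: contradiction with gap-freeness
    obtain ⟨a', l', hrp', hlast', u', hu', hdec', hwin'⟩ := hgf z hslz
    have hl'eq : l' = l₁ ++ ls :=
      aux_rootpath_unique (l'.length) l' (l₁ ++ ls) le_rfl hrp' hrpstar
        (by rw [hlast', hrplast])
    rw [hslab] at hwin'
    rw [hl'eq] at hu'
    rcases List.mem_append.mp hu' with h | h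
    · exact hnowin u' h ⟨a', o1.flip, hwin'⟩
    · exact hsall u' h a' hwin'
  · -- elected dictatorship implies gap-free
    intro hed v hleaf
    obtain ⟨l, hrp, hlast⟩ := aux_exists_rootpath (M := M) v
    obtain ⟨u, hu, a, hdict⟩ := hed l v hrp hlast hleaf
    refine ⟨a, l, hrp, hlast, u, hu, aux_dictator_decision hdict, ?_⟩
    cases h : (M.lab v).flip with
    | yes => exact hdict.1
    | no => exact hdict.2
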